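/- The operator norm of Σ_t^{−1} Σ̃_t Σ_t^{−1} is at most 1/λ. -/

import Mathlib

open Finset Matrix

/-- `Σ_t = ∑_{τ=1}^{t-1} η^{-τ} φ_τ φ_τᵀ + λ η^{-(t-1)} I`. -/
noncomputable def gramMatrix (d : ℕ) (η lam : ℝ) (t : ℕ)
    (φ : ℕ → EuclideanSpace ℝ (Fin d)) : Matrix (Fin d) (Fin d) ℝ :=
  ∑ τ ∈ Finset.Icc 1 (t - 1), η ^ (-(τ : ℤ)) • Matrix.vecMulVec (φ τ) (φ τ)
    + (lam * η ^ (-((t : ℤ) - 1))) • (1 : Matrix (Fin d) (Fin d) ℝ)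

/-- `Σ̃_t = ∑_{τ=1}^{t-1} η^{-2τ} φ_τ φ_τᵀ + λ η^{-2(t-1)} I`. -/
noncomputable def gramMatrixSq (d : ℕ) (η lam : ℝ) (t : ℕ)
    (φ : ℕ → EuclideanSpace ℝ (Fin d)) : Matrix (Fin d) (Fin d) ℝ :=
  ∑ τ ∈ Finset.Icc 1 (t - 1), η ^ (-2 * (τ : ℤ)) • Matrix.vecMulVec (φ τ) (φ τ)
    + (lam * η ^ (-2 * ((t : ℤ) - 1))) • (1 : Matrix (Fin d) (Fin d) ℝ)

section Aux

variable {d : ℕ}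

lemma aux_vecMulVec_mulVec (v x : Fin d → ℝ) :
    Matrix.vecMulVec v v *ᵥ x = (v ⬝ᵥ x) • v := by
  funext i
  simp [Matrix.vecMulVec, Matrix.mulVec, dotProduct, Finset.mul_sum, mul_comm,
    mul_left_comm]

lemma aux_dot_sum {ι : Type*} (s : Finset ι) (f : ι → Fin d → ℝ) (x : Fin d → ℝ) :
    x ⬝ᵥ (∑ τ ∈ s, f τ) = ∑ τ ∈ s, x ⬝ᵥ f τ := by
  induction s using Finset.cons_induction with
  | empty => simp [dotProduct]
  | cons a s ha ih => simp [Finset.sum_cons, dotProduct_add, ih]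

lemma aux_sum_mulVec {ι : Type*} (s : Finset ι) (f : ι → Matrix (Fin d) (Fin d) ℝ)
    (x : Fin d → ℝ) : (∑ τ ∈ s, f τ) *ᵥ x = ∑ τ ∈ s, f τ *ᵥ x := by
  induction s using Finset.cons_induction with
  | empty => simp [Matrix.mulVec, dotProduct]
  | cons a s ha ih => simp [Finset.sum_cons, Matrix.add_mulVec, ih]

/-- quadratic form of a weighted sum of rank-one matrices plus multiple of identity -/
lemma aux_quad {ι : Type*} (s : Finset ι) (c : ι → ℝ) (v : ι → Fin d → ℝ) (a : ℝ)
    (x : Fin d → ℝ) :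
    x ⬝ᵥ ((∑ τ ∈ s, c τ • Matrix.vecMulVec (v τ) (v τ) + a • (1 : Matrix (Fin d) (Fin d) ℝ))
        *ᵥ x)
      = ∑ τ ∈ s, c τ * (v τ ⬝ᵥ x) ^ 2 + a * (x ⬝ᵥ x) := by
  rw [Matrix.add_mulVec, dotProduct_add, aux_sum_mulVec]
  congr 1
  · rw [aux_dot_sum]
    refine Finset.sum_congr rfl fun τ _ => ?_
    rw [Matrix.smul_mulVec, aux_vecMulVec_mulVec, dotProduct_smul,
      dotProduct_smul, dotProduct_comm]
    simp [smul_eq_mul, sq]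
  · rw [Matrix.smul_mulVec, Matrix.one_mulVec, dotProduct_smul]
    simp [smul_eq_mul]

lemma aux_herm {ι : Type*} (s : Finset ι) (c : ι → ℝ) (v : ι → Fin d → ℝ) (a : ℝ) :
    (∑ τ ∈ s, c τ • Matrix.vecMulVec (v τ) (v τ)
      + a • (1 : Matrix (Fin d) (Fin d) ℝ)).IsHermitian := by
  apply Matrix.IsHermitian.ext
  intro i j
  simp only [star_trivial, Matrix.add_apply, Matrix.sum_apply, Matrix.smul_apply,
    Matrix.vecMulVec_apply, Matrix.one_apply, smul_eq_mul]
  congr 1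
  · exact Finset.sum_congr rfl fun τ _ => by ring
  · by_cases h : i = j <;> simp [h, eq_comm]

end Aux

theorem stmt_5 (d : ℕ) (hd : 1 ≤ d) (η lam : ℝ) (hη : η ∈ Set.Ioo (0 : ℝ) 1)
    (hlam : 0 < lam) (t : ℕ) (ht : 1 ≤ t) (φ : ℕ → EuclideanSpace ℝ (Fin d)) :
    ‖Matrix.toEuclideanCLM (𝕜 := ℝ)
        ((gramMatrix d η lam t φ)⁻¹ * gramMatrixSq d η lam t φ *
          (gramMatrix d η lam t φ)⁻¹)‖ ≤ 1 / lam := by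
  obtain ⟨hη0, hη1⟩ := hη
  have hηne : η ≠ 0 := ne_of_gt hη0
  set c : ℝ := η ^ (-((t : ℤ) - 1)) with hc
  have hcpos : 0 < c := zpow_pos hη0 _
  set Sg : Matrix (Fin d) (Fin d) ℝ := gramMatrix d η lam t φ with hSgdef
  set S : Matrix (Fin d) (Fin d) ℝ := gramMatrixSq d η lam t φ with hS
  -- quadratic forms
  have hQSg : ∀ x : Fin d → ℝ, x ⬝ᵥ (Sg *ᵥ x)
      = ∑ τ ∈ Finset.Icc 1 (t - 1), η ^ (-(τ : ℤ)) * ((φ τ : Fin d → ℝ) ⬝ᵥ x) ^ 2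
        + (lam * c) * (x ⬝ᵥ x) := fun x => aux_quad _ _ _ _ x
  have hQS : ∀ x : Fin d → ℝ, x ⬝ᵥ (S *ᵥ x)
      = ∑ τ ∈ Finset.Icc 1 (t - 1), η ^ (-2 * (τ : ℤ)) * ((φ τ : Fin d → ℝ) ⬝ᵥ x) ^ 2
        + (lam * η ^ (-2 * ((t : ℤ) - 1))) * (x ⬝ᵥ x) := fun x => aux_quad _ _ _ _ x
  have hdotnn : ∀ x : Fin d → ℝ, 0 ≤ x ⬝ᵥ x :=
    fun x => Finset.sum_nonneg fun i _ => mul_self_nonneg _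
  -- S ≤ c • Sg at the level of quadratic forms
  have hkey1 : ∀ x : Fin d → ℝ, x ⬝ᵥ (S *ᵥ x) ≤ c * (x ⬝ᵥ (Sg *ᵥ x)) := by
    intro x
    rw [hQS, hQSg, mul_add, Finset.mul_sum]
    have h2 : lam * η ^ (-2 * ((t : ℤ) - 1)) * (x ⬝ᵥ x)
        = c * (lam * c * (x ⬝ᵥ x)) := by
      have : η ^ (-2 * ((t : ℤ) - 1)) = c * c := by
        rw [hc, ← zpow_add₀ hηne]; ring_nf
      rw [this]; ring
    rw [h2]
    refine add_le_add (Finset.sum_le_sum fun τ hτ => ?_) le_rfl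
    have hτ' : (τ : ℤ) ≤ (t : ℤ) - 1 := by
      have h1 := (Finset.mem_Icc.mp hτ).2
      have h3 : ((τ : ℕ) : ℤ) ≤ ((t - 1 : ℕ) : ℤ) := Int.ofNat_le.mpr h1
      omega
    have hcoef : η ^ (-2 * (τ : ℤ)) ≤ c * η ^ (-(τ : ℤ)) := by
      rw [hc, ← zpow_add₀ hηne]
      exact zpow_le_zpow_right_of_le_one₀ hη0 hη1.le (by omega)
    calc η ^ (-2 * (τ : ℤ)) * ((φ τ : Fin d → ℝ) ⬝ᵥ x) ^ 2
        ≤ (c * η ^ (-(τ : ℤ))) * ((φ τ : Fin d → ℝ) ⬝ᵥ x) ^ 2 :=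
          mul_le_mul_of_nonneg_right hcoef (sq_nonneg _)
      _ = c * (η ^ (-(τ : ℤ)) * ((φ τ : Fin d → ℝ) ⬝ᵥ x) ^ 2) := by ring
  -- lower bound for Sg
  have hkey2 : ∀ x : Fin d → ℝ, lam * c * (x ⬝ᵥ x) ≤ x ⬝ᵥ (Sg *ᵥ x) := by
    intro x
    rw [hQSg]
    have h1 : (0:ℝ) ≤ ∑ τ ∈ Finset.Icc 1 (t - 1),
        η ^ (-(τ : ℤ)) * ((φ τ : Fin d → ℝ) ⬝ᵥ x) ^ 2 :=
      Finset.sum_nonneg fun τ _ => mul_nonneg (zpow_pos hη0 _).le (sq_nonneg _)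
    linarith
  have hkey3 : ∀ x : Fin d → ℝ, 0 ≤ x ⬝ᵥ (S *ᵥ x) := by
    intro x
    rw [hQS]
    have h1 : (0:ℝ) ≤ ∑ τ ∈ Finset.Icc 1 (t - 1),
        η ^ (-2 * (τ : ℤ)) * ((φ τ : Fin d → ℝ) ⬝ᵥ x) ^ 2 :=
      Finset.sum_nonneg fun τ _ => mul_nonneg (zpow_pos hη0 _).le (sq_nonneg _)
    have h2 : (0:ℝ) ≤ lam * η ^ (-2 * ((t : ℤ) - 1)) * (x ⬝ᵥ x) := by
      have := hdotnn x
      have := (zpow_pos hη0 (-2 * ((t : ℤ) - 1))).le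
      positivity
    linarith
  -- hermitian properties
  have hermSg : Sg.IsHermitian := aux_herm _ _ _ _
  have hermS : S.IsHermitian := aux_herm _ _ _ _
  -- positive definiteness of Sg
  have hPD : Sg.PosDef := by
    refine Matrix.posDef_iff_dotProduct_mulVec.mpr ⟨hermSg, fun x hx => ?_⟩
    have hxx : 0 < x ⬝ᵥ x := by
      obtain ⟨i, hi⟩ := Function.ne_iff.mp hx
      exact Finset.sum_pos' (fun j _ => mul_self_nonneg _)
        ⟨i, Finset.mem_univ i, mul_self_pos.mpr hi⟩
    have := hkey2 x
    have hpos : 0 < lam * c * (x ⬝ᵥ x) := by positivity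
    simpa [star_trivial] using lt_of_lt_of_le hpos this
  have hUnit : IsUnit Sg.det := (Matrix.isUnit_iff_isUnit_det Sg).mp hPD.isUnit
  have hSgmulinv : ∀ x : Fin d → ℝ, Sg *ᵥ (Sg⁻¹ *ᵥ x) = x := by
    intro x
    rw [Matrix.mulVec_mulVec, Matrix.mul_nonsing_inv _ hUnit, Matrix.one_mulVec]
  have hermSginv : (Sg⁻¹).IsHermitian := hermSg.inv
  set M : Matrix (Fin d) (Fin d) ℝ := Sg⁻¹ * S * Sg⁻¹ with hM
  have htransM : Mᵀ = M := by
    have : Mᴴ = M := by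
      rw [hM, Matrix.conjTranspose_mul, Matrix.conjTranspose_mul, hermSginv.eq, hermS.eq,
        Matrix.mul_assoc]
    rwa [Matrix.conjTranspose_eq_transpose_of_trivial] at this
  -- quadratic form of M
  have hquadM : ∀ x : Fin d → ℝ,
      x ⬝ᵥ (M *ᵥ x) = (Sg⁻¹ *ᵥ x) ⬝ᵥ (S *ᵥ (Sg⁻¹ *ᵥ x)) := by
    intro x
    have htr : (Sg⁻¹)ᵀ = Sg⁻¹ := by
      rw [← Matrix.conjTranspose_eq_transpose_of_trivial, hermSginv.eq]
    rw [hM, ← Matrix.mulVec_mulVec, ← Matrix.mulVec_mulVec, Matrix.dotProduct_mulVec,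
      ← Matrix.mulVec_transpose, htr]
  -- the two crucial properties of M's quadratic form
  have hMnonneg : ∀ x : Fin d → ℝ, 0 ≤ x ⬝ᵥ (M *ᵥ x) := by
    intro x; rw [hquadM]; exact hkey3 _
  have hMbound : ∀ x : Fin d → ℝ, x ⬝ᵥ (M *ᵥ x) ≤ (1 / lam) * (x ⬝ᵥ x) := by
    intro x
    set y : Fin d → ℝ := Sg⁻¹ *ᵥ x with hy
    have hyx : Sg *ᵥ y = x := hSgmulinv x
    set p : ℝ := y ⬝ᵥ x with hp
    have h1 : lam * c * (y ⬝ᵥ y) ≤ p := by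
      have := hkey2 y
      rwa [hyx] at this
    have hcs : p ^ 2 ≤ (y ⬝ᵥ y) * (x ⬝ᵥ x) := by
      have h := Finset.sum_mul_sq_le_sq_mul_sq Finset.univ y x
      simpa [hp, dotProduct, sq] using h
    have h2 : x ⬝ᵥ (M *ᵥ x) ≤ c * p := by
      rw [hquadM, ← hy]
      calc y ⬝ᵥ (S *ᵥ y) ≤ c * (y ⬝ᵥ (Sg *ᵥ y)) := hkey1 y
        _ = c * p := by rw [hyx]
    have hyy := hdotnn y
    have hxx := hdotnn x
    have h3 : lam * c * p ≤ x ⬝ᵥ x := by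
      rcases le_or_gt p 0 with hple | hpgt
      · have : lam * c * p ≤ 0 := mul_nonpos_of_nonneg_of_nonpos (by positivity) hple
        linarith
      · nlinarith [mul_le_mul_of_nonneg_left hcs (le_of_lt (mul_pos hlam hcpos))]
    calc x ⬝ᵥ (M *ᵥ x) ≤ c * p := h2
      _ ≤ (1 / lam) * (x ⬝ᵥ x) := by
          rw [div_mul_eq_mul_div, le_div_iff₀ hlam]; nlinarith
  -- Cauchy-Schwarz for the PSD bilinear form of M
  have hsymm : ∀ a b : Fin d → ℝ, a ⬝ᵥ (M *ᵥ b) = b ⬝ᵥ (M *ᵥ a) := by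
    intro a b
    rw [Matrix.dotProduct_mulVec, ← Matrix.mulVec_transpose, htransM, dotProduct_comm]
  have hCS : ∀ a b : Fin d → ℝ,
      (a ⬝ᵥ (M *ᵥ b)) ^ 2 ≤ (a ⬝ᵥ (M *ᵥ a)) * (b ⬝ᵥ (M *ᵥ b)) := by
    intro a b
    have hquad : ∀ s : ℝ, 0 ≤ (b ⬝ᵥ (M *ᵥ b)) * (s * s)
        + (2 * (a ⬝ᵥ (M *ᵥ b))) * s + (a ⬝ᵥ (M *ᵥ a)) := by
      intro s
      have h := hMnonneg (a + s • b)
      have hexp : (a + s • b) ⬝ᵥ (M *ᵥ (a + s • b))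
          = (b ⬝ᵥ (M *ᵥ b)) * (s * s) + (2 * (a ⬝ᵥ (M *ᵥ b))) * s + (a ⬝ᵥ (M *ᵥ a)) := by
        rw [Matrix.mulVec_add, Matrix.mulVec_smul, add_dotProduct,
          smul_dotProduct, dotProduct_add, dotProduct_add,
          dotProduct_smul, dotProduct_smul]
        have h' := hsymm b a
        simp only [smul_eq_mul]
        linear_combination s * h'
      linarith [hexp ▸ h]
    have hd := discrim_le_zero hquad
    rw [discrim] at hd
    nlinarith
  -- conclude the operator norm bound
  refine ContinuousLinearMap.opNorm_le_bound _ (by positivity) fun u => ?_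
  set u' : Fin d → ℝ := (WithLp.equiv 2 (Fin d → ℝ)) u with hu'
  have hTu : (WithLp.equiv 2 (Fin d → ℝ)) (Matrix.toEuclideanCLM (𝕜 := ℝ) M u) = M *ᵥ u' :=
    Matrix.ofLp_toEuclideanCLM M u
  have hnormu : ‖u‖ ^ 2 = u' ⬝ᵥ u' := by
    rw [EuclideanSpace.norm_eq, Real.sq_sqrt (Finset.sum_nonneg fun i _ => sq_nonneg _)]
    simp [dotProduct, hu', sq]
  have hnormTu : ‖Matrix.toEuclideanCLM (𝕜 := ℝ) M u‖ ^ 2 = (M *ᵥ u') ⬝ᵥ (M *ᵥ u') := by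
    rw [EuclideanSpace.norm_eq, Real.sq_sqrt (Finset.sum_nonneg fun i _ => sq_nonneg _)]
    have : ∀ i, (Matrix.toEuclideanCLM (𝕜 := ℝ) M u) i = (M *ᵥ u') i :=
      fun i => congrFun hTu i
    simp [dotProduct, this, sq]
  -- w := M *ᵥ u'
  set w : Fin d → ℝ := M *ᵥ u' with hw
  have key : (w ⬝ᵥ w) ≤ (1 / lam) ^ 2 * (u' ⬝ᵥ u') := by
    have h1 : w ⬝ᵥ w = w ⬝ᵥ (M *ᵥ u') := by rw [hw]
    have h2 : (w ⬝ᵥ (M *ᵥ u')) ^ 2 ≤ (w ⬝ᵥ (M *ᵥ w)) * (u' ⬝ᵥ (M *ᵥ u')) := hCS w u'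
    have h3 := hMbound w
    have h4 := hMbound u'
    have h5 := hMnonneg u'
    have h6 := hMnonneg w
    have hww := hdotnn w
    have huu := hdotnn u'
    rcases eq_or_lt_of_le hww with h0 | h0
    · rw [← h0]; exact mul_nonneg (by positivity) huu
    · have hA2 : (w ⬝ᵥ w) ^ 2 ≤ (1 / lam * (w ⬝ᵥ w)) * (1 / lam * (u' ⬝ᵥ u')) := by
        calc (w ⬝ᵥ w) ^ 2 = (w ⬝ᵥ (M *ᵥ u')) ^ 2 := by rw [h1]
          _ ≤ (w ⬝ᵥ (M *ᵥ w)) * (u' ⬝ᵥ (M *ᵥ u')) := h2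
          _ ≤ (1 / lam * (w ⬝ᵥ w)) * (1 / lam * (u' ⬝ᵥ u')) :=
              mul_le_mul h3 h4 h5 (by positivity)
      have h9 : (w ⬝ᵥ w) * (w ⬝ᵥ w) ≤ ((1 / lam) ^ 2 * (u' ⬝ᵥ u')) * (w ⬝ᵥ w) := by
        calc (w ⬝ᵥ w) * (w ⬝ᵥ w) = (w ⬝ᵥ w) ^ 2 := (sq (w ⬝ᵥ w)).symm
          _ ≤ (1 / lam * (w ⬝ᵥ w)) * (1 / lam * (u' ⬝ᵥ u')) := hA2
          _ = ((1 / lam) ^ 2 * (u' ⬝ᵥ u')) * (w ⬝ᵥ w) := by ring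
      exact le_of_mul_le_mul_right h9 h0
  have h7 : ‖Matrix.toEuclideanCLM (𝕜 := ℝ) M u‖ ^ 2 ≤ ((1 / lam) * ‖u‖) ^ 2 := by
    rw [hnormTu, mul_pow, hnormu]
    exact key
  have h8 : (0:ℝ) ≤ (1 / lam) * ‖u‖ := by positivity
  exact le_of_pow_le_pow_left₀ two_ne_zero h8 h7
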